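/- Let m ≥ 3, n ≥ 1, and let w be a word of length n over the alphabet {a,b,c}. Then w ∈ W_n^{(m)} if and only if w matches the regular expression a* c [ b^{≤m−3} (c ∪ bc ∪ a⁺b ∪ a⁺c) ]* b^{≤m−3} a⁺ c*, where b^{≤t} denotes (ε ∪ b ∪ b² ∪ ⋯ ∪ b^t). -/

import Mathlib

/-- The three-letter alphabet `{a, b, c}`. -/
inductive ABC : Type
  | a : ABC
  | b : ABC
  | c : ABC
  deriving DecidableEq, Repr

open ABC

/-- Words matching one of the alternatives `c`, `bc`, `a⁺b`, `a⁺c` of the regular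
expression `(c ∪ bc ∪ a⁺b ∪ a⁺c)`. -/
def Atom (u : List ABC) : Prop :=
  u = [c] ∨ u = [b, c] ∨
    ∃ i : ℕ, 1 ≤ i ∧ (u = List.replicate i a ++ [b] ∨ u = List.replicate i a ++ [c])

/-- Membership in `W_n`: words of length `n` of the form `a^i c u a c^j` (with `i, j ≥ 0`)
avoiding the subwords (i.e. blocks of consecutive letters) `bba`, `bbb`, `cba`, `cbb`. -/
def Wmem (n : ℕ) (w : List ABC) : Prop :=
  w.length = n ∧
  (∃ (i j : ℕ) (u : List ABC),
      w = List.replicate i a ++ [c] ++ u ++ [a] ++ List.replicate j c) ∧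
  ¬ [b, b, a] <:+: w ∧ ¬ [b, b, b] <:+: w ∧ ¬ [c, b, a] <:+: w ∧ ¬ [c, b, b] <:+: w

/-- Membership in `W_n^{(m)}`: words of length `n` of the form `a^i c u a c^j` (`i, j ≥ 0`)
avoiding the subwords `b^{m-1}a`, `b^m`, `cb^{m-2}a`, `cb^{m-1}`. -/
def WmMem (m n : ℕ) (w : List ABC) : Prop :=
  w.length = n ∧
  (∃ (i j : ℕ) (u : List ABC),
      w = List.replicate i a ++ [c] ++ u ++ [a] ++ List.replicate j c) ∧
  ¬ (List.replicate (m - 1) b ++ [a]) <:+: w ∧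
  ¬ (List.replicate m b) <:+: w ∧
  ¬ ([c] ++ List.replicate (m - 2) b ++ [a]) <:+: w ∧
  ¬ ([c] ++ List.replicate (m - 1) b) <:+: w

/-- The four forbidden patterns, avoided as prefixes. -/
def NoPre (m : ℕ) (s : List ABC) : Prop :=
  ¬ (List.replicate (m - 1) b ++ [a]) <+: s ∧
  ¬ (List.replicate m b) <+: s ∧
  ¬ ([c] ++ List.replicate (m - 2) b ++ [a]) <+: s ∧
  ¬ ([c] ++ List.replicate (m - 1) b) <+: s

lemma runPrefix : ∀ (k j : ℕ) {y x : ABC} {t rest : List ABC},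
    (List.replicate k b ++ y :: t) <+: (List.replicate j b ++ x :: rest) →
    y ≠ b → x ≠ b → k = j ∧ y = x ∧ t <+: rest := by
  intro k
  induction k with
  | zero =>
    intro j y x t rest h hy hx
    cases j with
    | zero =>
      rw [List.replicate_zero, List.nil_append, List.nil_append, List.cons_prefix_cons] at h
      exact ⟨rfl, h.1, h.2⟩
    | succ j =>
      rw [List.replicate_zero, List.nil_append, List.replicate_succ, List.cons_append,
        List.cons_prefix_cons] at h
      exact absurd h.1 hy
  | succ k ih =>
    intro j y x t rest h hy hx
    cases j with
    | zero =>
      rw [List.replicate_succ, List.replicate_zero, List.nil_append, List.cons_append,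
        List.cons_prefix_cons] at h
      exact absurd h.1.symm hx
    | succ j =>
      rw [List.replicate_succ, List.replicate_succ, List.cons_append, List.cons_append,
        List.cons_prefix_cons] at h
      obtain ⟨h1, h2, h3⟩ := ih j h.2 hy hx
      exact ⟨by omega, h2, h3⟩

lemma runPrefix2 : ∀ (k j : ℕ) {x : ABC} {rest : List ABC},
    (List.replicate k b) <+: (List.replicate j b ++ x :: rest) → x ≠ b → k ≤ j := by
  intro k
  induction k with
  | zero => intro j x rest h hx; omega
  | succ k ih =>
    intro j x rest h hx
    cases j with
    | zero =>
      rw [List.replicate_succ, List.replicate_zero, List.nil_append,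
        List.cons_prefix_cons] at h
      exact absurd h.1.symm hx
    | succ j =>
      rw [List.replicate_succ, List.replicate_succ, List.cons_append,
        List.cons_prefix_cons] at h
      exact Nat.succ_le_succ (ih j h.2 hx)

lemma pre_rep {j k : ℕ} (x : ABC) (z : List ABC) (h : j ≤ k) :
    List.replicate j x <+: List.replicate k x ++ z :=
  ⟨List.replicate (k - j) x ++ z, by
    rw [← List.append_assoc, ← List.replicate_add, Nat.add_sub_cancel' h]⟩

lemma not_b_pre_rep_c : ∀ (q : ℕ) (t : List ABC), ¬ (b :: t) <+: List.replicate q c := by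
  intro q
  induction q with
  | zero => intro t h; simp [List.prefix_nil] at h
  | succ q ih => intro t h; rw [List.replicate_succ, List.cons_prefix_cons] at h; exact absurd h.1 (by simp)


section
variable {m : ℕ} (hm : 3 ≤ m)
include hm

lemma np_nil : NoPre m [] := by
  refine ⟨?_, ?_, ?_, ?_⟩ <;> intro h <;> rw [List.prefix_nil] at h <;>
    simp [List.replicate_eq_nil_iff] at h <;> omega

lemma np_a (z : List ABC) : NoPre m (a :: z) := by
  have h1 : m - 1 = (m - 2) + 1 := by omega
  have h2 : m = (m - 1) + 1 := by omega
  refine ⟨?_, ?_, ?_, ?_⟩ <;> intro h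
  · rw [h1, List.replicate_succ, List.cons_append, List.cons_prefix_cons] at h
    exact absurd h.1 (by simp)
  · rw [h2, List.replicate_succ, List.cons_prefix_cons] at h
    exact absurd h.1 (by simp)
  · rw [List.cons_append, List.cons_append, List.cons_prefix_cons] at h
    exact absurd h.1 (by simp)
  · rw [List.cons_append, List.cons_prefix_cons] at h
    exact absurd h.1 (by simp)

lemma S1a {j : ℕ} (hj1 : 1 ≤ j) (hj : j ≤ m - 2) (rest : List ABC) :
    NoPre m (List.replicate j b ++ a :: rest) := by
  have hjj : j = (j - 1) + 1 := by omega
  refine ⟨?_, ?_, ?_, ?_⟩ <;> intro h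
  · obtain ⟨hk, -, -⟩ := runPrefix (m - 1) j h (by simp) (by simp)
    omega
  · have := runPrefix2 m j h (by simp); omega
  · rw [hjj, List.replicate_succ, List.cons_append, List.cons_append, List.cons_append,
      List.cons_prefix_cons] at h
    exact absurd h.1 (by simp)
  · rw [hjj, List.replicate_succ, List.cons_append, List.cons_append,
      List.cons_prefix_cons] at h
    exact absurd h.1 (by simp)

lemma S1c {j : ℕ} (hj1 : 1 ≤ j) (hj : j ≤ m - 1) (rest : List ABC) :
    NoPre m (List.replicate j b ++ c :: rest) := by
  have hjj : j = (j - 1) + 1 := by omega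
  refine ⟨?_, ?_, ?_, ?_⟩ <;> intro h
  · obtain ⟨-, hyx, -⟩ := runPrefix (m - 1) j h (by simp) (by simp)
    exact absurd hyx (by simp)
  · have := runPrefix2 m j h (by simp); omega
  · rw [hjj, List.replicate_succ, List.cons_append, List.cons_append, List.cons_append,
      List.cons_prefix_cons] at h
    exact absurd h.1 (by simp)
  · rw [hjj, List.replicate_succ, List.cons_append, List.cons_append,
      List.cons_prefix_cons] at h
    exact absurd h.1 (by simp)

lemma S2a {j : ℕ} (hj : j ≤ m - 3) (rest : List ABC) :
    NoPre m (c :: (List.replicate j b ++ a :: rest)) := by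
  have h1 : m - 1 = (m - 2) + 1 := by omega
  have h2 : m = (m - 1) + 1 := by omega
  refine ⟨?_, ?_, ?_, ?_⟩ <;> intro h
  · rw [h1, List.replicate_succ, List.cons_append, List.cons_prefix_cons] at h
    exact absurd h.1 (by simp)
  · rw [h2, List.replicate_succ, List.cons_prefix_cons] at h
    exact absurd h.1 (by simp)
  · rw [List.cons_append, List.cons_append, List.cons_prefix_cons] at h
    obtain ⟨hk, -, -⟩ := runPrefix (m - 2) j h.2 (by simp) (by simp)
    omega
  · rw [List.cons_append, List.cons_prefix_cons] at h
    have := runPrefix2 (m - 1) j h.2 (by simp); omega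

lemma S2c {j : ℕ} (hj : j ≤ m - 2) (rest : List ABC) :
    NoPre m (c :: (List.replicate j b ++ c :: rest)) := by
  have h1 : m - 1 = (m - 2) + 1 := by omega
  have h2 : m = (m - 1) + 1 := by omega
  refine ⟨?_, ?_, ?_, ?_⟩ <;> intro h
  · rw [h1, List.replicate_succ, List.cons_append, List.cons_prefix_cons] at h
    exact absurd h.1 (by simp)
  · rw [h2, List.replicate_succ, List.cons_prefix_cons] at h
    exact absurd h.1 (by simp)
  · rw [List.cons_append, List.cons_append, List.cons_prefix_cons] at h
    obtain ⟨-, hyx, -⟩ := runPrefix (m - 2) j h.2 (by simp) (by simp)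
    exact absurd hyx (by simp)
  · rw [List.cons_append, List.cons_prefix_cons] at h
    have := runPrefix2 (m - 1) j h.2 (by simp); omega

lemma S3 (q : ℕ) : NoPre m (c :: List.replicate q c) := by
  have h1 : m - 1 = (m - 2) + 1 := by omega
  have h2 : m = (m - 1) + 1 := by omega
  have h3 : m - 2 = (m - 3) + 1 := by omega
  refine ⟨?_, ?_, ?_, ?_⟩ <;> intro h
  · rw [h1, List.replicate_succ, List.cons_append, List.cons_prefix_cons] at h
    exact absurd h.1 (by simp)
  · rw [h2, List.replicate_succ, List.cons_prefix_cons] at h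
    exact absurd h.1 (by simp)
  · rw [List.cons_append, List.cons_append, List.cons_prefix_cons] at h
    rw [h3, List.replicate_succ] at h
    exact not_b_pre_rep_c q _ (by simpa using h.2)
  · rw [List.cons_append, List.cons_prefix_cons] at h
    rw [h1, List.replicate_succ] at h
    exact not_b_pre_rep_c q _ (by simpa using h.2)

end

lemma sfx {s x y : List ABC} (h : s <:+ x ++ y) :
    s <:+ y ∨ ∃ x', x' ≠ [] ∧ x' <:+ x ∧ s = x' ++ y := by
  rcases List.suffix_or_suffix_of_suffix h (List.suffix_append x y) with h1 | h1
  · exact Or.inl h1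
  · obtain ⟨x', rfl⟩ := h1
    by_cases hx : x' = []
    · subst hx; exact Or.inl (by simpa using List.suffix_refl y)
    · obtain ⟨pre, hp⟩ := h
      rw [← List.append_assoc] at hp
      exact Or.inr ⟨x', hx, ⟨pre, List.append_cancel_right hp⟩, rfl⟩

lemma suffix_replicate {s : List ABC} {q : ℕ} {x : ABC} (h : s <:+ List.replicate q x) :
    ∃ q' ≤ q, s = List.replicate q' x := by
  refine ⟨s.length, by simpa using h.length_le, ?_⟩
  exact List.eq_replicate_length.mpr fun y hy => List.eq_of_mem_replicate (h.subset hy)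

lemma sfx_rep {s y : List ABC} {k : ℕ} {x : ABC} (h : s <:+ List.replicate k x ++ y) :
    s <:+ y ∨ ∃ k', 1 ≤ k' ∧ k' ≤ k ∧ s = List.replicate k' x ++ y := by
  rcases sfx h with h1 | ⟨x', hne, hx', rfl⟩
  · exact Or.inl h1
  · obtain ⟨k', hk', rfl⟩ := suffix_replicate hx'
    exact Or.inr ⟨k', by
      rcases Nat.eq_zero_or_pos k' with h0 | h0
      · subst h0; simp at hne
      · exact h0, hk', rfl⟩

def Ends (r : List ABC) : Prop := ∃ (u : List ABC) (j : ℕ), r = u ++ [a] ++ List.replicate j c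

lemma ends_nil : ¬ Ends ([] : List ABC) := by
  rintro ⟨u, j, h⟩
  have := congrArg List.length h
  simp at this

lemma ends_cons {x : ABC} {z : List ABC} (h : Ends (x :: z)) :
    (x = a ∧ ∃ j, z = List.replicate j c) ∨ Ends z := by
  obtain ⟨u, j, hu⟩ := h
  cases u with
  | nil => simp at hu; exact Or.inl ⟨hu.1, j, hu.2⟩
  | cons y u' =>
    rw [List.cons_append, List.cons_append, List.cons.injEq] at hu
    exact Or.inr ⟨u', j, hu.2⟩

lemma ends_cons_of {x : ABC} {z : List ABC} (h : Ends z) : Ends (x :: z) := by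
  obtain ⟨u, j, rfl⟩ := h
  exact ⟨x :: u, j, rfl⟩

lemma ends_append_of {y z : List ABC} (h : Ends z) : Ends (y ++ z) := by
  induction y with
  | nil => simpa using h
  | cons x y ih => exact ends_cons_of ih

lemma ends_strip_b : ∀ (k : ℕ) {z : List ABC}, Ends (List.replicate k b ++ z) → Ends z := by
  intro k
  induction k with
  | zero => intro z h; simpa using h
  | succ k ih =>
    intro z h
    rw [List.replicate_succ, List.cons_append] at h
    rcases ends_cons h with ⟨h1, -⟩ | h1
    · exact absurd h1 (by simp)
    · exact ih h1

lemma ends_strip_a : ∀ (p : ℕ) {z : List ABC}, 1 ≤ p →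
    Ends (List.replicate p a ++ z) → (∃ q, z = List.replicate q c) ∨ Ends z := by
  intro p
  induction p with
  | zero => omega
  | succ p ih =>
    intro z hp h
    rw [List.replicate_succ, List.cons_append] at h
    rcases ends_cons h with ⟨-, j, hj⟩ | h1
    · cases p with
      | zero => exact Or.inl ⟨j, by simpa using hj⟩
      | succ p =>
        exfalso
        have : a ∈ List.replicate j c := by
          rw [← hj]; rw [List.replicate_succ]; simp
        exact absurd (List.eq_of_mem_replicate this) (by simp)
    · cases p with
      | zero => exact Or.inr (by simpa using h1)
      | succ p => exact ih (by omega) h1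

lemma split_run (x₀ : ABC) : ∀ r : List ABC, ∃ k r',
    r = List.replicate k x₀ ++ r' ∧ r'.head? ≠ some x₀ := by
  intro r
  induction r with
  | nil => exact ⟨0, [], by simp, by simp⟩
  | cons y z ih =>
    by_cases hy : y = x₀
    · obtain ⟨k, r', h1, h2⟩ := ih
      exact ⟨k + 1, r', by rw [List.replicate_succ, List.cons_append, ← h1, hy], h2⟩
    · exact ⟨0, y :: z, by simp, by simpa using hy⟩

inductive Reg (m : ℕ) : List ABC → Prop
  | base (t p q : ℕ) : t ≤ m - 3 → 1 ≤ p →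
      Reg m (List.replicate t b ++ List.replicate p a ++ List.replicate q c)
  | step (s : ℕ) (v r : List ABC) : s ≤ m - 3 → Atom v → Reg m r →
      Reg m (List.replicate s b ++ v ++ r)

lemma reg_ends {m : ℕ} {r : List ABC} (h : Reg m r) : Ends r := by
  induction h with
  | base t p q ht hp =>
    obtain ⟨p', rfl⟩ : ∃ p', p = p' + 1 := ⟨p - 1, by omega⟩
    exact ⟨List.replicate t b ++ List.replicate p' a, q, by
      rw [List.replicate_succ']; simp [List.append_assoc]⟩
  | step s v r hs hv hr ih =>
    rw [List.append_assoc]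
    exact ends_append_of (ends_append_of ih)

lemma suffix_ab {x' : List ABC} (h : x' <:+ [a, b]) : x' = [] ∨ x' = [b] ∨ x' = [a, b] := by
  rcases List.suffix_cons_iff.1 h with rfl | h
  · right; right; rfl
  · rcases List.suffix_cons_iff.1 h with rfl | h
    · right; left; rfl
    · left; exact List.suffix_nil.1 h

lemma suffix_one {x' : List ABC} {y : ABC} (h : x' <:+ [y]) : x' = [] ∨ x' = [y] := by
  rcases List.suffix_cons_iff.1 h with rfl | h
  · right; rfl
  · left; exact List.suffix_nil.1 h

lemma bk {m : ℕ} (hm : 3 ≤ m) {r : List ABC} (hr : Reg m r) :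
    ∀ p₀ : List ABC, p₀ = [c] ∨ p₀ = [a, b] → ∀ s, s <:+ p₀ ++ r → NoPre m s := by
  induction hr with
  | base t p q ht hp =>
    intro p₀ hp₀ s hs
    obtain ⟨p', rfl⟩ : ∃ p', p = p' + 1 := ⟨p - 1, by omega⟩
    rw [show p₀ ++ (List.replicate t b ++ List.replicate (p' + 1) a ++ List.replicate q c)
        = p₀ ++ (List.replicate t b ++ (a :: (List.replicate p' a ++ List.replicate q c)))
        from by simp [List.replicate_succ, List.append_assoc]] at hs
    rcases sfx hs with h1 | ⟨x', hne, hx', rfl⟩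
    · rcases sfx_rep h1 with h2 | ⟨t', ht1', ht2', rfl⟩
      · rcases List.suffix_cons_iff.1 h2 with rfl | h3
        · exact np_a hm _
        · rcases sfx_rep h3 with h4 | ⟨p'', hp1, hp2, rfl⟩
          · obtain ⟨q', hq', rfl⟩ := suffix_replicate h4
            cases q' with
            | zero => exact np_nil hm
            | succ q'' => rw [List.replicate_succ]; exact S3 hm q''
          · rw [show List.replicate p'' a ++ List.replicate q c
                = a :: (List.replicate (p'' - 1) a ++ List.replicate q c) from by
              rw [show p'' = (p'' - 1) + 1 from by omega]
              simp [List.replicate_succ]]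
            exact np_a hm _
      · exact S1a hm ht1' (by omega) _
    · rcases hp₀ with rfl | rfl
      · rcases suffix_one hx' with rfl | rfl
        · exact absurd rfl hne
        · rw [show ([c] : List ABC) ++ (List.replicate t b ++
              (a :: (List.replicate p' a ++ List.replicate q c)))
            = c :: (List.replicate t b ++ a :: (List.replicate p' a ++ List.replicate q c))
            from by simp]
          exact S2a hm ht _
      · rcases suffix_ab hx' with rfl | rfl | rfl
        · exact absurd rfl hne
        · rw [show ([b] : List ABC) ++ (List.replicate t b ++
              (a :: (List.replicate p' a ++ List.replicate q c)))
            = List.replicate (t + 1) b ++ (a :: (List.replicate p' a ++ List.replicate q c))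
            from by simp [List.replicate_succ]]
          exact S1a hm (by omega) (by omega) _
        · rw [show ([a, b] : List ABC) ++ (List.replicate t b ++
              (a :: (List.replicate p' a ++ List.replicate q c)))
            = a :: ([b] ++ (List.replicate t b ++
              (a :: (List.replicate p' a ++ List.replicate q c)))) from by simp]
          exact np_a hm _
  | step k v r hk hv hr ih =>
    intro p₀ hp₀ s hs
    rw [show p₀ ++ (List.replicate k b ++ v ++ r)
        = p₀ ++ (List.replicate k b ++ (v ++ r)) from by simp [List.append_assoc]] at hs
    rcases sfx hs with h1 | ⟨x', hne, hx', rfl⟩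
    · rcases sfx_rep h1 with h2 | ⟨k', hk1, hk2, rfl⟩
      · -- s <:+ v ++ r
        rcases hv with rfl | rfl | ⟨i, hi, rfl | rfl⟩
        · exact ih [c] (Or.inl rfl) s h2
        · rw [show ([b, c] : List ABC) ++ r = [b] ++ ([c] ++ r) from by simp] at h2
          rcases sfx h2 with h3 | ⟨x', hne', hx', rfl⟩
          · exact ih [c] (Or.inl rfl) s h3
          · rcases suffix_one hx' with rfl | rfl
            · exact absurd rfl hne'
            · rw [show ([b] : List ABC) ++ ([c] ++ r) = List.replicate 1 b ++ (c :: r)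
                from by simp]
              exact S1c hm le_rfl (by omega) r
        · obtain ⟨i', rfl⟩ : ∃ i', i = i' + 1 := ⟨i - 1, by omega⟩
          rw [show (List.replicate (i' + 1) a ++ [b]) ++ r
              = List.replicate (i' + 1) a ++ ([b] ++ r) from by simp [List.append_assoc]] at h2
          rcases sfx_rep h2 with h3 | ⟨i'', hi1, hi2, rfl⟩
          · exact ih [a, b] (Or.inr rfl) s (h3.trans ⟨[a], by simp⟩)
          · rw [show List.replicate i'' a ++ ([b] ++ r)
                = a :: (List.replicate (i'' - 1) a ++ ([b] ++ r)) from by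
              rw [show i'' = (i'' - 1) + 1 from by omega]
              simp [List.replicate_succ]]
            exact np_a hm _
        · obtain ⟨i', rfl⟩ : ∃ i', i = i' + 1 := ⟨i - 1, by omega⟩
          rw [show (List.replicate (i' + 1) a ++ [c]) ++ r
              = List.replicate (i' + 1) a ++ ([c] ++ r) from by simp [List.append_assoc]] at h2
          rcases sfx_rep h2 with h3 | ⟨i'', hi1, hi2, rfl⟩
          · exact ih [c] (Or.inl rfl) s h3
          · rw [show List.replicate i'' a ++ ([c] ++ r)
                = a :: (List.replicate (i'' - 1) a ++ ([c] ++ r)) from by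
              rw [show i'' = (i'' - 1) + 1 from by omega]
              simp [List.replicate_succ]]
            exact np_a hm _
      · -- s = replicate k' b ++ (v ++ r), 1 ≤ k' ≤ k
        rcases hv with rfl | rfl | ⟨i, hi, rfl | rfl⟩
        · rw [show List.replicate k' b ++ (([c] : List ABC) ++ r)
              = List.replicate k' b ++ (c :: r) from by simp]
          exact S1c hm hk1 (by omega) r
        · rw [show List.replicate k' b ++ (([b, c] : List ABC) ++ r)
              = List.replicate (k' + 1) b ++ (c :: r) from by
            simp [List.replicate_succ', List.append_assoc]]
          exact S1c hm (by omega) (by omega) r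
        · obtain ⟨i', rfl⟩ : ∃ i', i = i' + 1 := ⟨i - 1, by omega⟩
          rw [show List.replicate k' b ++ ((List.replicate (i' + 1) a ++ [b]) ++ r)
              = List.replicate k' b ++ (a :: (List.replicate i' a ++ ([b] ++ r))) from by
            simp [List.replicate_succ, List.append_assoc]]
          exact S1a hm hk1 (by omega) _
        · obtain ⟨i', rfl⟩ : ∃ i', i = i' + 1 := ⟨i - 1, by omega⟩
          rw [show List.replicate k' b ++ ((List.replicate (i' + 1) a ++ [c]) ++ r)
              = List.replicate k' b ++ (a :: (List.replicate i' a ++ ([c] ++ r))) from by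
            simp [List.replicate_succ, List.append_assoc]]
          exact S1a hm hk1 (by omega) _
    · -- s = x' ++ (replicate k b ++ (v ++ r))
      rcases hp₀ with rfl | rfl
      · rcases suffix_one hx' with rfl | rfl
        · exact absurd rfl hne
        · rcases hv with rfl | rfl | ⟨i, hi, rfl | rfl⟩
          · rw [show ([c] : List ABC) ++ (List.replicate k b ++ (([c] : List ABC) ++ r))
                = c :: (List.replicate k b ++ c :: r) from by simp]
            exact S2c hm (by omega) r
          · rw [show ([c] : List ABC) ++ (List.replicate k b ++ (([b, c] : List ABC) ++ r))
                = c :: (List.replicate (k + 1) b ++ c :: r) from by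
              simp [List.replicate_succ', List.append_assoc]]
            exact S2c hm (by omega) r
          · obtain ⟨i', rfl⟩ : ∃ i', i = i' + 1 := ⟨i - 1, by omega⟩
            rw [show ([c] : List ABC) ++
                  (List.replicate k b ++ ((List.replicate (i' + 1) a ++ [b]) ++ r))
                = c :: (List.replicate k b ++ a :: (List.replicate i' a ++ ([b] ++ r)))
                from by simp [List.replicate_succ, List.append_assoc]]
            exact S2a hm hk _
          · obtain ⟨i', rfl⟩ : ∃ i', i = i' + 1 := ⟨i - 1, by omega⟩
            rw [show ([c] : List ABC) ++
                  (List.replicate k b ++ ((List.replicate (i' + 1) a ++ [c]) ++ r))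
                = c :: (List.replicate k b ++ a :: (List.replicate i' a ++ ([c] ++ r)))
                from by simp [List.replicate_succ, List.append_assoc]]
            exact S2a hm hk _
      · rcases suffix_ab hx' with rfl | rfl | rfl
        · exact absurd rfl hne
        · rcases hv with rfl | rfl | ⟨i, hi, rfl | rfl⟩
          · rw [show ([b] : List ABC) ++ (List.replicate k b ++ (([c] : List ABC) ++ r))
                = List.replicate (k + 1) b ++ (c :: r) from by
              simp [List.replicate_succ, List.append_assoc]]
            exact S1c hm (by omega) (by omega) r
          · rw [show ([b] : List ABC) ++ (List.replicate k b ++ (([b, c] : List ABC) ++ r))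
                = List.replicate (k + 2) b ++ (c :: r) from by
              simp [show k + 2 = 1 + (k + 1) from by omega, List.replicate_add,
                List.replicate_succ', List.append_assoc]]
            exact S1c hm (by omega) (by omega) r
          · obtain ⟨i', rfl⟩ : ∃ i', i = i' + 1 := ⟨i - 1, by omega⟩
            rw [show ([b] : List ABC) ++
                  (List.replicate k b ++ ((List.replicate (i' + 1) a ++ [b]) ++ r))
                = List.replicate (k + 1) b ++ (a :: (List.replicate i' a ++ ([b] ++ r)))
                from by simp [List.replicate_succ, List.append_assoc]]
            exact S1a hm (by omega) (by omega) _
          · obtain ⟨i', rfl⟩ : ∃ i', i = i' + 1 := ⟨i - 1, by omega⟩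
            rw [show ([b] : List ABC) ++
                  (List.replicate k b ++ ((List.replicate (i' + 1) a ++ [c]) ++ r))
                = List.replicate (k + 1) b ++ (a :: (List.replicate i' a ++ ([c] ++ r)))
                from by simp [List.replicate_succ, List.append_assoc]]
            exact S1a hm (by omega) (by omega) _
        · rw [show ([a, b] : List ABC) ++ (List.replicate k b ++ (v ++ r))
              = a :: ([b] ++ (List.replicate k b ++ (v ++ r))) from by simp]
          exact np_a hm _

lemma fwd {m : ℕ} (hm : 3 ≤ m) : ∀ (N : ℕ) (r : List ABC), r.length ≤ N → Ends r →
    ∀ p₀ : List ABC, p₀ = [c] ∨ p₀ = [a, b] →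
    (∀ s, s <:+ p₀ ++ r → NoPre m s) → Reg m r := by
  intro N
  induction N with
  | zero =>
    intro r hlen hE _ _ _
    have : r = [] := List.length_eq_zero_iff.1 (by omega)
    subst this
    exact absurd hE ends_nil
  | succ N ihN =>
    intro r hlen hE p₀ hp₀ Hav
    obtain ⟨k, r', hr, hhead⟩ := split_run b r
    subst hr
    have hE' : Ends r' := ends_strip_b k hE
    cases r' with
    | nil => exact absurd hE' ends_nil
    | cons x r₂ =>
      cases x with
      | b => simp at hhead
      | a =>
        have hkb : k ≤ m - 3 := by
          by_contra hcon
          push_neg at hcon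
          rcases hp₀ with rfl | rfl
          · rcases Nat.lt_or_ge k (m - 1) with hlt | hge
            · have hk2 : k = m - 2 := by omega
              subst hk2
              exact (Hav _ (List.suffix_refl _)).2.2.1
                ⟨r₂, by simp [List.append_assoc]⟩
            · refine (Hav _ (List.suffix_refl _)).2.2.2 ?_
              simp only [List.cons_append, List.nil_append]
              exact List.cons_prefix_cons.mpr ⟨rfl, pre_rep b _ hge⟩
          · have hsfx : [b] ++ (List.replicate k b ++ a :: r₂)
                <:+ [a, b] ++ (List.replicate k b ++ a :: r₂) := ⟨[a], by simp⟩
            rcases Nat.lt_or_ge k (m - 1) with hlt | hge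
            · have hk2 : k = m - 2 := by omega
              subst hk2
              refine (Hav _ hsfx).1 ?_
              rw [show ([b] : List ABC) ++ (List.replicate (m - 2) b ++ a :: r₂)
                  = List.replicate (m - 2 + 1) b ++ a :: r₂ from by
                simp [List.replicate_succ]]
              rw [show m - 2 + 1 = m - 1 from by omega]
              exact ⟨r₂, by simp [List.append_assoc]⟩
            · refine (Hav _ hsfx).2.1 ?_
              rw [show ([b] : List ABC) ++ (List.replicate k b ++ a :: r₂)
                  = List.replicate (k + 1) b ++ (a :: r₂) from by
                simp [List.replicate_succ]]
              exact pre_rep b _ (by omega)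
        obtain ⟨p', r₂', ha2, hh2⟩ := split_run a (a :: r₂)
        have hp1 : 1 ≤ p' := by
          rcases Nat.eq_zero_or_pos p' with h0 | h0
          · subst h0; simp at ha2; rw [← ha2] at hh2; simp at hh2
          · exact h0
        obtain ⟨p'', rfl⟩ : ∃ p'', p' = p'' + 1 := ⟨p' - 1, by omega⟩
        rcases ends_strip_a _ hp1 (ha2 ▸ hE') with ⟨q, rfl⟩ | hE2
        · rw [ha2]
          have := Reg.base (m := m) k (p'' + 1) q hkb hp1
          rwa [List.append_assoc] at this
        · cases r₂' with
          | nil => exact absurd hE2 ends_nil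
          | cons y r₃ =>
            have hlen3 : r₃.length ≤ N := by
              have h1 := congrArg List.length ha2
              simp at h1 hlen
              omega
            cases y with
            | a => simp at hh2
            | b =>
              have hE3 : Ends r₃ := by
                rcases ends_cons hE2 with ⟨hb, -⟩ | h
                · exact absurd hb (by simp)
                · exact h
              have hsub : [a, b] ++ r₃ <:+ p₀ ++ (List.replicate k b ++ a :: r₂) := by
                refine ⟨p₀ ++ List.replicate k b ++ List.replicate p'' a, ?_⟩
                rw [show (List.replicate k b ++ a :: r₂ : List ABC)
                    = List.replicate k b ++ (a :: r₂) from rfl, ha2]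
                simp [List.replicate_succ', List.append_assoc]
              have hreg3 := ihN r₃ hlen3 hE3 [a, b] (Or.inr rfl)
                (fun s hs => Hav s (hs.trans hsub))
              have := Reg.step k (List.replicate (p'' + 1) a ++ [b]) r₃ hkb
                (Or.inr (Or.inr ⟨p'' + 1, hp1, Or.inl rfl⟩)) hreg3
              rw [show (List.replicate k b ++ a :: r₂ : List ABC)
                  = List.replicate k b ++ (a :: r₂) from rfl, ha2]
              rwa [show List.replicate k b ++ (List.replicate (p'' + 1) a ++ [b]) ++ r₃
                  = List.replicate k b ++ (List.replicate (p'' + 1) a ++ b :: r₃) from by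
                simp [List.append_assoc]] at this
            | c =>
              have hE3 : Ends r₃ := by
                rcases ends_cons hE2 with ⟨hb, -⟩ | h
                · exact absurd hb (by simp)
                · exact h
              have hsub : [c] ++ r₃ <:+ p₀ ++ (List.replicate k b ++ a :: r₂) := by
                refine ⟨p₀ ++ List.replicate k b ++ List.replicate (p'' + 1) a, ?_⟩
                rw [show (List.replicate k b ++ a :: r₂ : List ABC)
                    = List.replicate k b ++ (a :: r₂) from rfl, ha2]
                simp [List.append_assoc]
              have hreg3 := ihN r₃ hlen3 hE3 [c] (Or.inl rfl)
                (fun s hs => Hav s (hs.trans hsub))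
              have := Reg.step k (List.replicate (p'' + 1) a ++ [c]) r₃ hkb
                (Or.inr (Or.inr ⟨p'' + 1, hp1, Or.inr rfl⟩)) hreg3
              rw [show (List.replicate k b ++ a :: r₂ : List ABC)
                  = List.replicate k b ++ (a :: r₂) from rfl, ha2]
              rwa [show List.replicate k b ++ (List.replicate (p'' + 1) a ++ [c]) ++ r₃
                  = List.replicate k b ++ (List.replicate (p'' + 1) a ++ c :: r₃) from by
                simp [List.append_assoc]] at this
      | c =>
        have hkb : k ≤ m - 2 := by
          by_contra hcon
          push_neg at hcon
          rcases hp₀ with rfl | rfl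
          · refine (Hav _ (List.suffix_refl _)).2.2.2 ?_
            simp only [List.cons_append, List.nil_append]
            exact List.cons_prefix_cons.mpr ⟨rfl, pre_rep b _ (by omega)⟩
          · have hsfx : [b] ++ (List.replicate k b ++ c :: r₂)
                <:+ [a, b] ++ (List.replicate k b ++ c :: r₂) := ⟨[a], by simp⟩
            refine (Hav _ hsfx).2.1 ?_
            rw [show ([b] : List ABC) ++ (List.replicate k b ++ c :: r₂)
                = List.replicate (k + 1) b ++ (c :: r₂) from by
              simp [List.replicate_succ]]
            exact pre_rep b _ (by omega)
        have hE2 : Ends r₂ := by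
          rcases ends_cons hE' with ⟨hb, -⟩ | h
          · exact absurd hb (by simp)
          · exact h
        have hsub : [c] ++ r₂ <:+ p₀ ++ (List.replicate k b ++ c :: r₂) :=
          ⟨p₀ ++ List.replicate k b, by simp [List.append_assoc]⟩
        have hlen2 : r₂.length ≤ N := by simp at hlen; omega
        have hreg2 := ihN r₂ hlen2 hE2 [c] (Or.inl rfl)
          (fun s hs => Hav s (hs.trans hsub))
        rcases Nat.lt_or_ge k (m - 2) with hlt | hge
        · have := Reg.step k [c] r₂ (by omega) (Or.inl rfl) hreg2
          rwa [show List.replicate k b ++ [c] ++ r₂ = List.replicate k b ++ c :: r₂ from by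
            simp [List.append_assoc]] at this
        · have hk2 : k = (m - 3) + 1 := by omega
          rw [hk2]
          have := Reg.step (m - 3) [b, c] r₂ le_rfl (Or.inr (Or.inl rfl)) hreg2
          rwa [show List.replicate (m - 3) b ++ [b, c] ++ r₂
              = List.replicate ((m - 3) + 1) b ++ c :: r₂ from by
            simp [List.replicate_succ', List.append_assoc]] at this

lemma reg_to_L {m : ℕ} {r : List ABC} (h : Reg m r) :
    ∃ (t p q : ℕ) (L : List (List ABC)),
      (∀ u ∈ L, ∃ (s : ℕ) (v : List ABC), s ≤ m - 3 ∧ Atom v ∧ u = List.replicate s b ++ v) ∧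
      t ≤ m - 3 ∧ 1 ≤ p ∧
      r = L.flatten ++ List.replicate t b ++ List.replicate p a ++ List.replicate q c := by
  induction h with
  | base t p q ht hp => exact ⟨t, p, q, [], by simp, ht, hp, by simp⟩
  | step s v r hs hv hr ih =>
    obtain ⟨t, p, q, L, hL, ht, hp, hr'⟩ := ih
    refine ⟨t, p, q, (List.replicate s b ++ v) :: L, ?_, ht, hp, ?_⟩
    · intro u hu
      rcases List.mem_cons.1 hu with rfl | hu
      · exact ⟨s, v, hs, hv, rfl⟩
      · exact hL u hu
    · rw [hr']; simp [List.append_assoc]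

lemma L_to_reg {m : ℕ} (t p q : ℕ) (ht : t ≤ m - 3) (hp : 1 ≤ p) :
    ∀ L : List (List ABC),
      (∀ u ∈ L, ∃ (s : ℕ) (v : List ABC), s ≤ m - 3 ∧ Atom v ∧ u = List.replicate s b ++ v) →
      Reg m (L.flatten ++ List.replicate t b ++ List.replicate p a ++ List.replicate q c) := by
  intro L
  induction L with
  | nil => intro _; simpa using Reg.base t p q ht hp
  | cons u L ih =>
    intro hL
    obtain ⟨s, v, hs, hv, hu⟩ := hL u List.mem_cons_self
    subst hu
    have := Reg.step s v _ hs hv (ih (fun u hu => hL u (List.mem_cons_of_mem _ hu)))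
    rwa [show List.replicate s b ++ v ++ (L.flatten ++ List.replicate t b
          ++ List.replicate p a ++ List.replicate q c)
        = ((List.replicate s b ++ v) :: L).flatten ++ List.replicate t b
          ++ List.replicate p a ++ List.replicate q c from by
      simp [List.append_assoc]] at this

theorem stmt19 (m n : ℕ) (hm : 3 ≤ m) (hn : 1 ≤ n) (w : List ABC) (hw : w.length = n) :
    WmMem m n w ↔
      ∃ (i t p q : ℕ) (L : List (List ABC)),
        (∀ u ∈ L, ∃ (s : ℕ) (v : List ABC),
            s ≤ m - 3 ∧ Atom v ∧ u = List.replicate s b ++ v) ∧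
        t ≤ m - 3 ∧ 1 ≤ p ∧
        w = List.replicate i a ++ [c] ++ L.flatten ++ List.replicate t b
              ++ List.replicate p a ++ List.replicate q c := by
  constructor
  · rintro ⟨hlen, ⟨i, j, u, hform⟩, h1, h2, h3, h4⟩
    have hw2 : w = List.replicate i a ++ ([c] ++ (u ++ [a] ++ List.replicate j c)) := by
      rw [hform]; simp [List.append_assoc]
    have hE : Ends (u ++ [a] ++ List.replicate j c) := ⟨u, j, rfl⟩
    have Hav : ∀ s, s <:+ [c] ++ (u ++ [a] ++ List.replicate j c) → NoPre m s := by
      intro s hs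
      have hsw : s <:+ w := hs.trans ⟨List.replicate i a, hw2.symm⟩
      exact ⟨fun hp => h1 (hp.isInfix.trans hsw.isInfix),
             fun hp => h2 (hp.isInfix.trans hsw.isInfix),
             fun hp => h3 (hp.isInfix.trans hsw.isInfix),
             fun hp => h4 (hp.isInfix.trans hsw.isInfix)⟩
    have hreg := fwd hm (u ++ [a] ++ List.replicate j c).length _ le_rfl hE [c]
      (Or.inl rfl) Hav
    obtain ⟨t, p, q, L, hL, ht, hp, hreq⟩ := reg_to_L hreg
    exact ⟨i, t, p, q, L, hL, ht, hp, by rw [hw2, hreq]; simp [List.append_assoc]⟩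
  · rintro ⟨i, t, p, q, L, hL, ht, hp, hform⟩
    have hreg := L_to_reg t p q ht hp L hL
    have hw2 : w = List.replicate i a ++ ([c] ++ (L.flatten ++ List.replicate t b
        ++ List.replicate p a ++ List.replicate q c)) := by
      rw [hform]; simp [List.append_assoc]
    have hnp : ∀ t', t' <:+ w → NoPre m t' := by
      intro t' hsuf
      rw [hw2] at hsuf
      rcases sfx hsuf with h' | ⟨x', hne, hx', rfl⟩
      · exact bk hm hreg [c] (Or.inl rfl) t' h'
      · obtain ⟨ℓ, hℓ, rfl⟩ := suffix_replicate hx'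
        have hℓ1 : 1 ≤ ℓ := by
          rcases Nat.eq_zero_or_pos ℓ with h0 | h0
          · subst h0; simp at hne
          · exact h0
        obtain ⟨ℓ', rfl⟩ : ∃ ℓ', ℓ = ℓ' + 1 := ⟨ℓ - 1, by omega⟩
        rw [show List.replicate (ℓ' + 1) a ++ ([c] ++ (L.flatten ++ List.replicate t b
              ++ List.replicate p a ++ List.replicate q c))
            = a :: (List.replicate ℓ' a ++ ([c] ++ (L.flatten ++ List.replicate t b
              ++ List.replicate p a ++ List.replicate q c))) from by
          simp [List.replicate_succ]]
        exact np_a hm _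
    refine ⟨hw, ?_, ?_, ?_, ?_, ?_⟩
    · obtain ⟨u', j', hu'⟩ := reg_ends hreg
      exact ⟨i, j', u', by rw [hw2, hu']; simp [List.append_assoc]⟩
    · intro hinf
      obtain ⟨t', hpre, hsuf⟩ := List.infix_iff_prefix_suffix.1 hinf
      exact (hnp t' hsuf).1 hpre
    · intro hinf
      obtain ⟨t', hpre, hsuf⟩ := List.infix_iff_prefix_suffix.1 hinf
      exact (hnp t' hsuf).2.1 hpre
    · intro hinf
      obtain ⟨t', hpre, hsuf⟩ := List.infix_iff_prefix_suffix.1 hinf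
      exact (hnp t' hsuf).2.2.1 hpre
    · intro hinf
      obtain ⟨t', hpre, hsuf⟩ := List.infix_iff_prefix_suffix.1 hinf
      exact (hnp t' hsuf).2.2.2 hpre
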